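/- Let w := (w_n)_{n∈ℕ} be a bounded sequence of scalars in 𝕂. The unilateral weighted backward shift B_w : (x₁,x₂,x₃,…) ∈ c₀(ℕ) ↦ (w₁x₂, w₂x₃, …) ∈ c₀(ℕ) is Li-Yorke chaotic if and only if sup{ |w_i ⋯ w_j| : i, j ∈ ℕ, i ≤ j } = ∞. -/

import Mathlib

open Filter Topology MeasureTheory ENNReal

noncomputable section

def LiYorkePair {M : Type*} [PseudoMetricSpace M] (g : M → M) (x y : M) : Prop :=
  Filter.liminf (fun n : ℕ => edist (g^[n] x) (g^[n] y)) Filter.atTop = 0 ∧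
  0 < Filter.limsup (fun n : ℕ => edist (g^[n] x) (g^[n] y)) Filter.atTop

def LiYorkeChaotic {M : Type*} [PseudoMetricSpace M] (g : M → M) : Prop :=
  ∃ S : Set M, ¬ S.Countable ∧ S.Pairwise (LiYorkePair g)

def DenselyLiYorkeChaotic {M : Type*} [PseudoMetricSpace M] (g : M → M) : Prop :=
  ∃ S : Set M, Dense S ∧ ¬ S.Countable ∧ S.Pairwise (LiYorkePair g)

theorem ofReal_norm_eq_coe_nnnorm {E : Type*} [SeminormedAddCommGroup E] (a : E) :
    ENNReal.ofReal ‖a‖ = (‖a‖₊ : ℝ≥0∞) := by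
  rw [← coe_nnnorm]; exact ENNReal.ofReal_coe_nnreal

theorem edist_eq_coe_nnnorm_sub {E : Type*} [SeminormedAddCommGroup E] (a b : E) :
    edist a b = (‖a - b‖₊ : ℝ≥0∞) := by
  rw [edist_dist, dist_eq_norm, ofReal_norm_eq_coe_nnnorm]

namespace ShiftAux

variable {𝕂 : Type} [RCLike 𝕂]

theorem norm_apply_le (f : ZeroAtInftyContinuousMap ℕ 𝕂) (m : ℕ) : ‖f m‖ ≤ ‖f‖ := by
  rw [← ZeroAtInftyContinuousMap.norm_toBCF_eq_norm]
  exact BoundedContinuousFunction.norm_coe_le_norm f.toBCF m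

theorem norm_le_of (f : ZeroAtInftyContinuousMap ℕ 𝕂) (C : ℝ) (hC : 0 ≤ C)
    (h : ∀ m, ‖f m‖ ≤ C) : ‖f‖ ≤ C := by
  rw [← ZeroAtInftyContinuousMap.norm_toBCF_eq_norm]
  exact (BoundedContinuousFunction.norm_le hC).2 h

variable (w : ℕ → 𝕂) (T : ZeroAtInftyContinuousMap ℕ 𝕂 → ZeroAtInftyContinuousMap ℕ 𝕂)
  (hT : ∀ x n, T x n = w n * x (n + 1))

include hT in
theorem iter_apply : ∀ (n : ℕ) (x : ZeroAtInftyContinuousMap ℕ 𝕂) (m : ℕ),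
    (T^[n] x) m = (∏ t ∈ Finset.Ico m (m + n), w t) * x (m + n) := by
  intro n
  induction n with
  | zero => intro x m; simp
  | succ n ih =>
    intro x m
    rw [Function.iterate_succ_apply, ih (T x) m, hT, ← Nat.add_assoc,
      Finset.prod_Ico_succ_top (Nat.le_add_right m n), mul_assoc]

include hT in
theorem iter_smul (n : ℕ) (c : 𝕂) (x : ZeroAtInftyContinuousMap ℕ 𝕂) :
    T^[n] (c • x) = c • T^[n] x := by
  ext m
  rw [ZeroAtInftyContinuousMap.smul_apply, iter_apply w T hT, iter_apply w T hT,
    ZeroAtInftyContinuousMap.smul_apply, smul_eq_mul, smul_eq_mul]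
  ring

include hT in
theorem iter_sub (n : ℕ) (x y : ZeroAtInftyContinuousMap ℕ 𝕂) :
    T^[n] x - T^[n] y = T^[n] (x - y) := by
  ext m
  rw [ZeroAtInftyContinuousMap.sub_apply, iter_apply w T hT, iter_apply w T hT,
    iter_apply w T hT, ZeroAtInftyContinuousMap.sub_apply]
  ring

def recChoice {α : Type*} (P : α → Prop) (Q : ℕ → α → α → Prop)
    (h0 : ∃ a, P a) (h : ∀ k a, ∃ b, Q k a b) : ℕ → α
  | 0 => Classical.choose h0
  | (k+1) => Classical.choose (h k (recChoice P Q h0 h k))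

theorem recChoice_zero {α : Type*} (P : α → Prop) (Q : ℕ → α → α → Prop)
    (h0 : ∃ a, P a) (h : ∀ k a, ∃ b, Q k a b) : P (recChoice P Q h0 h 0) :=
  Classical.choose_spec h0

theorem recChoice_succ {α : Type*} (P : α → Prop) (Q : ℕ → α → α → Prop)
    (h0 : ∃ a, P a) (h : ∀ k a, ∃ b, Q k a b) (k : ℕ) :
    Q k (recChoice P Q h0 h k) (recChoice P Q h0 h (k+1)) :=
  Classical.choose_spec (h k (recChoice P Q h0 h k))

theorem exists_seq (w : ℕ → 𝕂) (C : ℝ)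
    (hbig : ∀ R : ℝ, ∃ a b : ℕ, a ≤ b ∧ R < ‖∏ t ∈ Finset.Icc a b, w t‖) :
    ∃ a b : ℕ → ℕ, (∀ k, a k ≤ b k) ∧
      ((1:ℝ) ≤ ‖∏ t ∈ Finset.Icc (a 0) (b 0), w t‖) ∧
      (∀ k : ℕ, ((k:ℝ)+2) * C ^ (b k + 2) ≤ ‖∏ t ∈ Finset.Icc (a (k+1)) (b (k+1)), w t‖) := by
  set P : ℕ × ℕ → Prop := fun q => q.1 ≤ q.2 ∧ (1:ℝ) ≤ ‖∏ t ∈ Finset.Icc q.1 q.2, w t‖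
    with hP
  set Q : ℕ → ℕ × ℕ → ℕ × ℕ → Prop := fun k p q =>
    q.1 ≤ q.2 ∧ ((k:ℝ)+2) * C ^ (p.2 + 2) ≤ ‖∏ t ∈ Finset.Icc q.1 q.2, w t‖ with hQ
  have h0 : ∃ q, P q := by
    obtain ⟨a, b, hab, h⟩ := hbig 1
    exact ⟨(a, b), hab, h.le⟩
  have hQe : ∀ k p, ∃ q, Q k p q := by
    intro k p
    obtain ⟨a, b, hab, h⟩ := hbig (((k:ℝ)+2) * C ^ (p.2 + 2))
    exact ⟨(a, b), hab, h.le⟩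
  refine ⟨fun k => (recChoice P Q h0 hQe k).1, fun k => (recChoice P Q h0 hQe k).2,
    ?_, (recChoice_zero P Q h0 hQe).2, fun k => (recChoice_succ P Q h0 hQe k).2⟩
  intro k
  cases k with
  | zero => exact (recChoice_zero P Q h0 hQe).1
  | succ k => exact (recChoice_succ P Q h0 hQe k).1

end ShiftAux

theorem unilateral_shift_c0_liYorke_iff
    {𝕂 : Type} [RCLike 𝕂] (w : ℕ → 𝕂) (hwb : ∃ C : ℝ, ∀ n, ‖w n‖ ≤ C)
    (T : ZeroAtInftyContinuousMap ℕ 𝕂 → ZeroAtInftyContinuousMap ℕ 𝕂)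
    (hT : ∀ x n, T x n = w n * x (n + 1)) :
    LiYorkeChaotic T ↔
      (⨆ (i : ℕ) (j : ℕ) (_ : i ≤ j), (‖∏ t ∈ Finset.Icc i j, w t‖₊ : ℝ≥0∞)) = ⊤ := by
  constructor
  · -- chaos implies unbounded products
    intro hch
    by_contra hA
    set A := ⨆ (i : ℕ) (j : ℕ) (_ : i ≤ j), (‖∏ t ∈ Finset.Icc i j, w t‖₊ : ℝ≥0∞) with hAdef
    have hbound : ∀ i j : ℕ, i ≤ j → ‖∏ t ∈ Finset.Icc i j, w t‖ ≤ A.toReal := by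
      intro i j hij
      have h1 : (‖∏ t ∈ Finset.Icc i j, w t‖₊ : ℝ≥0∞) ≤ A :=
        le_iSup_of_le i (le_iSup_of_le j (le_iSup_of_le hij le_rfl))
      have h2 := ENNReal.toReal_mono hA h1
      rwa [ENNReal.coe_toReal, coe_nnnorm] at h2
    obtain ⟨S, hSc, hSp⟩ := hch
    have hSnt : S.Nontrivial := Set.not_subsingleton_iff.mp fun h => hSc h.countable
    obtain ⟨x, hx, y, hy, hxy⟩ := hSnt
    obtain ⟨hlim0, hlimpos⟩ := hSp hx hy hxy
    set v := x - y with hv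
    set e := fun n : ℕ => edist (T^[n] x) (T^[n] y) with he_def
    have he : ∀ n, e n = ENNReal.ofReal ‖T^[n] v‖ := by
      intro n
      simp only [he_def]
      rw [edist_dist, dist_eq_norm, ShiftAux.iter_sub w T hT]
    set B := ENNReal.ofReal A.toReal + 1 with hB
    have hB0 : B ≠ 0 := by simp [hB]
    have hBt : B ≠ ⊤ := by simp [hB, ENNReal.ofReal_ne_top]
    have key : ∀ m n : ℕ, m ≤ n → e n ≤ B * e m := by
      intro m n hmn
      rcases eq_or_lt_of_le hmn with rfl | h
      · calc e m = 1 * e m := (one_mul _).symm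
          _ ≤ B * e m := mul_le_mul_left (by simp [hB]) _
      · have hr : ∀ p, ‖(T^[n] v) p‖ ≤ A.toReal * ‖T^[m] v‖ := by
          intro p
          have h1 : T^[n] v = T^[n - m] (T^[m] v) := by
            rw [← Function.iterate_add_apply, Nat.sub_add_cancel hmn]
          rw [h1, ShiftAux.iter_apply w T hT, norm_mul]
          have h2 : ‖∏ t ∈ Finset.Ico p (p + (n - m)), w t‖ ≤ A.toReal := by
            have h3 : Finset.Ico p (p + (n - m)) = Finset.Icc p (p + (n - m) - 1) := by
              rw [← Finset.Ico_add_one_right_eq_Icc]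
              congr 1
              omega
            rw [h3]
            exact hbound p _ (by omega)
          exact mul_le_mul h2 (ShiftAux.norm_apply_le _ _) (norm_nonneg _)
            ENNReal.toReal_nonneg
        have h4 : ‖T^[n] v‖ ≤ A.toReal * ‖T^[m] v‖ :=
          ShiftAux.norm_le_of _ _ (mul_nonneg ENNReal.toReal_nonneg (norm_nonneg _)) hr
        rw [he n, he m]
        calc ENNReal.ofReal ‖T^[n] v‖ ≤ ENNReal.ofReal (A.toReal * ‖T^[m] v‖) :=
              ENNReal.ofReal_le_ofReal h4
          _ = ENNReal.ofReal A.toReal * ENNReal.ofReal ‖T^[m] v‖ :=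
              ENNReal.ofReal_mul ENNReal.toReal_nonneg
          _ ≤ B * ENNReal.ofReal ‖T^[m] v‖ := mul_le_mul_left le_self_add _
    have hzero : limsup e atTop ≤ 0 := by
      refine ENNReal.le_of_forall_pos_le_add fun ε hε _ => ?_
      have hδ : (0:ℝ≥0∞) < (ε : ℝ≥0∞) / B :=
        ENNReal.div_pos (by exact_mod_cast hε.ne') hBt
      have hlt : liminf e atTop < (ε : ℝ≥0∞) / B := hlim0 ▸ hδ
      obtain ⟨m, hm⟩ := (frequently_lt_of_liminf_lt (by isBoundedDefault) hlt).exists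
      calc limsup e atTop ≤ B * e m :=
            limsup_le_of_le (by isBoundedDefault)
              (eventually_atTop.2 ⟨m, fun n hn => key m n hn⟩)
        _ ≤ B * ((ε : ℝ≥0∞) / B) := mul_le_mul_right hm.le _
        _ = (ε : ℝ≥0∞) := ENNReal.mul_div_cancel hB0 hBt
        _ ≤ 0 + (ε : ℝ≥0∞) := by rw [zero_add]
    exact absurd hzero hlimpos.not_ge
  · -- unbounded products imply chaos
    intro hsup
    classical
    obtain ⟨C0, hC0⟩ := hwb
    set C := max C0 2 with hCdef
    have hC1 : (1:ℝ) < C := lt_of_lt_of_le one_lt_two (le_max_right _ _)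
    have hC0' : (0:ℝ) < C := lt_trans one_pos hC1
    have hw' : ∀ n, ‖w n‖ ≤ C := fun n => le_trans (hC0 n) (le_max_left _ _)
    have hprodIco : ∀ m r : ℕ, ‖∏ t ∈ Finset.Ico m (m + r), w t‖ ≤ C ^ r := by
      intro m r
      rw [norm_prod]
      calc ∏ t ∈ Finset.Ico m (m + r), ‖w t‖ ≤ ∏ _t ∈ Finset.Ico m (m + r), C :=
            Finset.prod_le_prod (fun _ _ => norm_nonneg _) fun t _ => hw' t
        _ = C ^ r := by rw [Finset.prod_const, Nat.card_Ico]; congr 1; omega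
    have hprodIcc : ∀ a b : ℕ, ‖∏ t ∈ Finset.Icc a b, w t‖ ≤ C ^ (b + 1 - a) := by
      intro a b
      rcases le_or_gt a (b + 1) with h | h
      · have h2 : b + 1 = a + (b + 1 - a) := by omega
        rw [← Finset.Ico_add_one_right_eq_Icc]
        have h3 := hprodIco a (b + 1 - a)
        rwa [← h2] at h3
      · rw [← Finset.Ico_add_one_right_eq_Icc, Finset.Ico_eq_empty (by omega), Finset.prod_empty, norm_one]
        exact one_le_pow₀ hC1.le
    have hbig : ∀ R : ℝ, ∃ a b : ℕ, a ≤ b ∧ R < ‖∏ t ∈ Finset.Icc a b, w t‖ := by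
      intro R
      have h1 : ENNReal.ofReal R < ⨆ (i : ℕ) (j : ℕ) (_ : i ≤ j),
          (‖∏ t ∈ Finset.Icc i j, w t‖₊ : ℝ≥0∞) := by
        rw [hsup]
        exact ENNReal.ofReal_lt_top.trans_le le_top
      rw [lt_iSup_iff] at h1
      obtain ⟨i, h2⟩ := h1
      rw [lt_iSup_iff] at h2
      obtain ⟨j, h3⟩ := h2
      rw [lt_iSup_iff] at h3
      obtain ⟨hij, h4⟩ := h3
      refine ⟨i, j, hij, ?_⟩
      by_contra h
      push_neg at h
      rw [← ofReal_norm_eq_coe_nnnorm] at h4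
      exact absurd h4 (not_lt.2 (ENNReal.ofReal_le_ofReal h))
    obtain ⟨a, b, hab, hP0, hPstep⟩ := ShiftAux.exists_seq w C hbig
    set Pk : ℕ → 𝕂 := fun k => ∏ t ∈ Finset.Icc (a k) (b k), w t with hPk
    have hpow_pos : ∀ r : ℕ, (0:ℝ) < C ^ r := fun r => pow_pos hC0' r
    have hpow_one_le : ∀ r : ℕ, (1:ℝ) ≤ C ^ r := fun r => one_le_pow₀ hC1.le
    have hP1 : ∀ k : ℕ, ((k:ℝ) + 1) ≤ ‖Pk k‖ := by
      intro k
      cases k with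
      | zero =>
        have : ((0:ℕ):ℝ) + 1 = 1 := by norm_num
        rw [this]
        exact hP0
      | succ k =>
        have h1 := hPstep k
        have h2 : ((k:ℝ) + 2) ≤ ((k:ℝ) + 2) * C ^ (b k + 2) := by
          nlinarith [hpow_one_le (b k + 2)]
        push_cast
        linarith
    have hPpos : ∀ k, (0:ℝ) < ‖Pk k‖ := fun k =>
      lt_of_lt_of_le (by positivity) (hP1 k)
    have hbmono : ∀ k, b k < b (k + 1) := by
      intro k
      by_contra hcon
      push_neg at hcon
      have h1 := hPstep k
      have h2 := hprodIcc (a (k + 1)) (b (k + 1))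
      have h3 : C ^ (b (k + 1) + 1 - a (k + 1)) ≤ C ^ (b k + 1) :=
        pow_le_pow_right₀ hC1.le (by omega)
      have h4 : C ^ (b k + 1) < C ^ (b k + 2) := pow_lt_pow_right₀ hC1 (by omega)
      have h5 : C ^ (b k + 2) ≤ ((k:ℝ) + 2) * C ^ (b k + 2) := by
        nlinarith [hpow_pos (b k + 2)]
      linarith
    have hbstrict : StrictMono b := strictMono_nat_of_lt_succ hbmono
    -- the vector z
    set z : ℕ → 𝕂 := fun n =>
      if h : ∃ k, b k + 1 = n then ((‖Pk (Nat.find h)‖⁻¹ : ℝ) : 𝕂) else 0 with hzdef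
    have hzval : ∀ k, z (b k + 1) = ((‖Pk k‖⁻¹ : ℝ) : 𝕂) := by
      intro k
      have hex : ∃ j, b j + 1 = b k + 1 := ⟨k, rfl⟩
      have hfind : Nat.find hex = k := by
        have h1 := Nat.find_spec hex
        exact hbstrict.injective (by omega)
      rw [hzdef]
      simp only [dif_pos hex, hfind]
    have hz0 : ∀ n, (¬ ∃ k, b k + 1 = n) → z n = 0 := by
      intro n hn
      rw [hzdef]
      simp only [dif_neg hn]
    have hztendsto : Tendsto z atTop (𝓝 0) := by
      rw [Metric.tendsto_atTop]
      intro δ hδ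
      obtain ⟨K, hK⟩ := exists_nat_one_div_lt hδ
      refine ⟨b K + 2, fun n hn => ?_⟩
      rw [dist_zero_right]
      by_cases hex : ∃ k, b k + 1 = n
      · obtain ⟨k, hk⟩ := hex
        have hkK : K < k := by
          have : b K < b k := by omega
          exact (hbstrict.lt_iff_lt).mp this
        rw [← hk, hzval k, RCLike.norm_ofReal, abs_of_nonneg (by positivity)]
        calc ‖Pk k‖⁻¹ ≤ ((k:ℝ) + 1)⁻¹ := by
              apply inv_anti₀ (by positivity) (hP1 k)
          _ ≤ 1 / ((K:ℝ) + 1) := by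
              rw [one_div]
              apply inv_anti₀ (by positivity)
              have : (K:ℝ) ≤ (k:ℝ) := by exact_mod_cast hkK.le
              linarith
          _ < δ := hK
      · rw [hz0 n hex, norm_zero]
        exact hδ
    set z' : ZeroAtInftyContinuousMap ℕ 𝕂 :=
      ⟨⟨z, continuous_of_discreteTopology⟩, by
        rwa [cocompact_eq_cofinite, Nat.cofinite_eq_atTop]⟩ with hz'def
    have hz'app : ∀ n, z' n = z n := fun _ => rfl
    -- lower estimate
    have hu_low : ∀ k, (1:ℝ) ≤ ‖T^[b k + 1 - a k] z'‖ := by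
      intro k
      have h2 : a k + (b k + 1 - a k) = b k + 1 := by have := hab k; omega
      have h1 : (T^[b k + 1 - a k] z') (a k) = Pk k * ((‖Pk k‖⁻¹ : ℝ) : 𝕂) := by
        rw [ShiftAux.iter_apply w T hT, h2, hz'app, hzval k, Finset.Ico_add_one_right_eq_Icc]
      have h3 : ‖(T^[b k + 1 - a k] z') (a k)‖ = 1 := by
        rw [h1, norm_mul, RCLike.norm_ofReal, abs_of_nonneg (by positivity),
          mul_inv_cancel₀ (hPpos k).ne']
      calc (1:ℝ) = ‖(T^[b k + 1 - a k] z') (a k)‖ := h3.symm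
        _ ≤ ‖T^[b k + 1 - a k] z'‖ := ShiftAux.norm_apply_le _ _
    -- upper estimate
    have hu_up : ∀ k, ‖T^[b k + 2] z'‖ ≤ 1 / ((k:ℝ) + 1) := by
      intro k
      apply ShiftAux.norm_le_of _ _ (by positivity)
      intro m
      rw [ShiftAux.iter_apply w T hT, hz'app]
      by_cases hex : ∃ j, b j + 1 = m + (b k + 2)
      · obtain ⟨j, hj⟩ := hex
        have hkj : k < j := (hbstrict.lt_iff_lt).mp (by omega)
        obtain ⟨j', rfl⟩ : ∃ j', j = j' + 1 := ⟨j - 1, by omega⟩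
        have hj'k : k ≤ j' := by omega
        have hzv : z (m + (b k + 2)) = ((‖Pk (j' + 1)‖⁻¹ : ℝ) : 𝕂) := by
          rw [← hj, hzval (j' + 1)]
        rw [hzv, norm_mul, RCLike.norm_ofReal, abs_of_nonneg (by positivity)]
        have hb1 : ((k:ℝ) + 1) * C ^ (b k + 2) ≤ ‖Pk (j' + 1)‖ := by
          calc ((k:ℝ) + 1) * C ^ (b k + 2) ≤ ((j':ℝ) + 2) * C ^ (b j' + 2) := by
                have hc1 : ((k:ℝ) + 1) ≤ ((j':ℝ) + 2) := by
                  have : (k:ℝ) ≤ (j':ℝ) := by exact_mod_cast hj'k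
                  linarith
                have hbb : b k ≤ b j' := hbstrict.le_iff_le.mpr hj'k
                have hc2 : C ^ (b k + 2) ≤ C ^ (b j' + 2) :=
                  pow_le_pow_right₀ hC1.le (by omega)
                have := hpow_pos (b k + 2)
                nlinarith
            _ ≤ ‖Pk (j' + 1)‖ := hPstep j'
        have hb2 : ‖Pk (j' + 1)‖⁻¹ ≤ (((k:ℝ) + 1) * C ^ (b k + 2))⁻¹ := by
          apply inv_anti₀ (by positivity) hb1
        have hb3 : ‖∏ t ∈ Finset.Ico m (m + (b k + 2)), w t‖ ≤ C ^ (b k + 2) :=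
          hprodIco m (b k + 2)
        calc ‖∏ t ∈ Finset.Ico m (m + (b k + 2)), w t‖ * ‖Pk (j' + 1)‖⁻¹
            ≤ C ^ (b k + 2) * (((k:ℝ) + 1) * C ^ (b k + 2))⁻¹ := by
              apply mul_le_mul hb3 hb2 (by positivity) (hpow_pos _).le
          _ = 1 / ((k:ℝ) + 1) := by
              rw [mul_inv, ← mul_assoc, mul_comm (C ^ (b k + 2)) (((k:ℝ) + 1))⁻¹,
                mul_assoc, mul_inv_cancel₀ (hpow_pos _).ne', mul_one, one_div]
      · rw [hz0 _ hex, mul_zero, norm_zero]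
        positivity
    -- key limit facts for scalar multiples
    have hφten : Tendsto (fun k => b k + 2) atTop atTop :=
      tendsto_atTop_mono (fun k => le_trans (hbstrict.le_apply) (Nat.le_add_right _ 2))
        tendsto_id
    have hLYlim : ∀ δ : 𝕂, δ ≠ 0 →
        liminf (fun n : ℕ => (‖δ‖₊ : ℝ≥0∞) * (‖T^[n] z'‖₊ : ℝ≥0∞)) atTop = 0 ∧
        0 < limsup (fun n : ℕ => (‖δ‖₊ : ℝ≥0∞) * (‖T^[n] z'‖₊ : ℝ≥0∞)) atTop := by
      intro δ hδ
      set E : ℕ → ℝ≥0∞ := fun n => (‖δ‖₊ : ℝ≥0∞) * (‖T^[n] z'‖₊ : ℝ≥0∞) with hE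
      constructor
      · -- liminf = 0
        have htend : Tendsto (fun k => E (b k + 2)) atTop (𝓝 0) := by
          have hb : Tendsto (fun k : ℕ => (‖δ‖₊ : ℝ≥0∞) * ENNReal.ofReal (1 / ((k:ℝ) + 1)))
              atTop (𝓝 0) := by
            have h1 : Tendsto (fun k : ℕ => ENNReal.ofReal (1 / ((k:ℝ) + 1))) atTop
                (𝓝 (ENNReal.ofReal 0)) :=
              ENNReal.tendsto_ofReal tendsto_one_div_add_atTop_nhds_zero_nat
            rw [ENNReal.ofReal_zero] at h1
            have h2 : Tendsto (fun k : ℕ => (‖δ‖₊ : ℝ≥0∞) * ENNReal.ofReal (1 / ((k:ℝ) + 1)))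
                atTop (𝓝 ((‖δ‖₊ : ℝ≥0∞) * 0)) :=
              ENNReal.Tendsto.const_mul h1 (Or.inr ENNReal.coe_ne_top)
            rwa [mul_zero] at h2
          refine tendsto_of_tendsto_of_tendsto_of_le_of_le tendsto_const_nhds hb
            (fun k => zero_le) fun k => ?_
          rw [hE]
          apply mul_le_mul_right
          rw [← ofReal_norm_eq_coe_nnnorm]
          exact ENNReal.ofReal_le_ofReal (hu_up k)
        refine le_antisymm ?_ zero_le
        refine ENNReal.le_of_forall_pos_le_add fun ε hε _ => ?_
        rw [zero_add]
        have hev : ∀ᶠ k in atTop, E (b k + 2) < (ε : ℝ≥0∞) :=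
          htend.eventually_lt_const (ENNReal.coe_pos.mpr hε)
        have hfreq : ∃ᶠ n in atTop, E n ≤ (ε : ℝ≥0∞) :=
          hφten.frequently ((hev.mono fun k hk => hk.le).frequently)
        exact liminf_le_of_frequently_le hfreq
      · -- limsup > 0
        have hδ0 : (0:ℝ≥0∞) < (‖δ‖₊ : ℝ≥0∞) := by
          simpa using nnnorm_pos.mpr hδ
        refine lt_of_lt_of_le hδ0 (le_limsup_of_frequently_le ?_)
        rw [frequently_atTop]
        intro N
        obtain ⟨k, hk⟩ := exists_nat_gt (C ^ N)
        refine ⟨b k + 1 - a k, ?_, ?_⟩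
        · -- N ≤ b k + 1 - a k
          have h1 : ‖Pk k‖ ≤ C ^ (b k + 1 - a k) := hprodIcc (a k) (b k)
          have h2 : C ^ N < C ^ (b k + 1 - a k) := by
            have h3 : (k:ℝ) + 1 ≤ ‖Pk k‖ := hP1 k
            have h4 : (k:ℝ) < (k:ℝ) + 1 := by linarith
            linarith
          exact le_of_lt ((pow_lt_pow_iff_right₀ hC1).mp h2)
        · rw [hE]
          calc (‖δ‖₊ : ℝ≥0∞) = (‖δ‖₊ : ℝ≥0∞) * 1 := (mul_one _).symm
            _ ≤ _ := by
                apply mul_le_mul_right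
                rw [← ofReal_norm_eq_coe_nnnorm]
                calc (1:ℝ≥0∞) = ENNReal.ofReal 1 := by simp
                  _ ≤ ENNReal.ofReal ‖T^[b k + 1 - a k] z'‖ :=
                      ENNReal.ofReal_le_ofReal (hu_low k)
    -- the scrambled set
    have hz'ne : z' (b 0 + 1) ≠ 0 := by
      rw [hz'app, hzval 0]
      exact_mod_cast RCLike.ofReal_ne_zero.mpr (inv_ne_zero (hPpos 0).ne')
    have hinj : Function.Injective fun c : ℝ => ((c : 𝕂)) • z' := by
      intro c c' h
      have h1 : ((c : 𝕂)) • z' (b 0 + 1) = ((c' : 𝕂)) • z' (b 0 + 1) := by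
        have := congrArg (fun f : ZeroAtInftyContinuousMap ℕ 𝕂 => f (b 0 + 1)) h
        simpa [ZeroAtInftyContinuousMap.smul_apply] using this
      have h2 : (c : 𝕂) = (c' : 𝕂) := by
        rw [smul_eq_mul, smul_eq_mul] at h1
        exact mul_right_cancel₀ hz'ne h1
      exact RCLike.ofReal_injective h2
    refine ⟨(fun c : ℝ => ((c : 𝕂)) • z') '' Set.Icc 0 1, ?_, ?_⟩
    · intro h
      have h2 : (Set.Icc (0:ℝ) 1).Countable :=
        (h.preimage hinj).mono (Set.subset_preimage_image _ _)
      have h3 := h2.measure_zero volume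
      rw [Real.volume_Icc] at h3
      norm_num at h3
    · rintro x ⟨c, _, rfl⟩ y ⟨c', _, rfl⟩ hne
      have hcc : c ≠ c' := fun h => hne (by rw [h])
      set δ : 𝕂 := (c : 𝕂) - (c' : 𝕂) with hδdef
      have hδ : δ ≠ 0 := sub_ne_zero.mpr fun h => hcc (RCLike.ofReal_injective h)
      have hdist : ∀ n : ℕ, edist (T^[n] (((c : 𝕂)) • z')) (T^[n] (((c' : 𝕂)) • z'))
          = (‖δ‖₊ : ℝ≥0∞) * (‖T^[n] z'‖₊ : ℝ≥0∞) := by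
        intro n
        rw [edist_eq_coe_nnnorm_sub, ShiftAux.iter_smul w T hT, ShiftAux.iter_smul w T hT]
        have hsub : ((c : 𝕂)) • T^[n] z' - ((c' : 𝕂)) • T^[n] z' = δ • T^[n] z' := by
          ext p
          simp only [ZeroAtInftyContinuousMap.sub_apply, ZeroAtInftyContinuousMap.smul_apply,
            smul_eq_mul, hδdef, sub_mul]
        have hnorm : ‖δ • T^[n] z'‖ = ‖δ‖ * ‖T^[n] z'‖ := norm_smul δ (T^[n] z')
        rw [hsub, ← ofReal_norm_eq_coe_nnnorm, hnorm, ENNReal.ofReal_mul (norm_nonneg δ),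
          ofReal_norm_eq_coe_nnnorm, ofReal_norm_eq_coe_nnnorm]
      obtain ⟨hli, hls⟩ := hLYlim δ hδ
      constructor
      · simpa only [hdist] using hli
      · simpa only [hdist] using hls

end
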